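/- Assume p ≥ 1 and let t, r be natural numbers with r ≥ 1. Suppose there exists x̃ ∈ ℤ^q with ‖B·x̃ − y‖_p^p ≤ t. Then for every z ∈ ℤ^{h+g} with ‖B_BCH·z − s‖_p^p = r, the vector u_z := B_int·(x̃ ∘ z ∘ (−1)) = (2B·x̃ − 2y) ∘ (B_BCH·z − s) is a nonzero element of the lattice L(B_int) with ‖u_z‖_p^p ≤ 2^p·t + r, and the map z ↦ u_z is injective. In particular, if there are at least N distinct vectors z ∈ ℤ^{h+g} with ‖B_BCH·z − s‖_p^p = r, then L(B_int) contains at least N distinct nonzero vectors u with ‖u‖_p^p ≤ 2^p·t + r. -/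
import Mathlib


/-- The BCH gadget lattice basis `B_BCH = [[Id_h, 0], [l·P, 2l·Id_g]]`. -/
def BBCH (g h l : ℕ) (P : Matrix (Fin g) (Fin h) ℤ) :
    Matrix (Fin h ⊕ Fin g) (Fin h ⊕ Fin g) ℤ :=
  Matrix.fromBlocks 1 0 ((l : ℤ) • P) ((2 * l : ℤ) • 1)

/-- The intermediate lattice basis `B_int = [[2B, 0, 2y], [0, B_BCH, s]]`. -/
def Bint (n q g h l : ℕ) (B : Matrix (Fin n) (Fin q) ℤ) (y : Fin n → ℤ)
    (P : Matrix (Fin g) (Fin h) ℤ) (s : Fin h ⊕ Fin g → ℤ) :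
    Matrix (Fin n ⊕ (Fin h ⊕ Fin g)) ((Fin q ⊕ (Fin h ⊕ Fin g)) ⊕ Unit) ℤ :=
  Matrix.of fun i j =>
    match i, j with
    | Sum.inl i, Sum.inl (Sum.inl j) => 2 * B i j
    | Sum.inl _, Sum.inl (Sum.inr _) => 0
    | Sum.inl i, Sum.inr _ => 2 * y i
    | Sum.inr _, Sum.inl (Sum.inl _) => 0
    | Sum.inr i, Sum.inl (Sum.inr j) => BBCH g h l P i j
    | Sum.inr i, Sum.inr _ => s i

/-- The lattice vector `u_z = B_int · (x̃ ∘ z ∘ (−1))`. -/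
def uvec (n q g h l : ℕ) (B : Matrix (Fin n) (Fin q) ℤ) (y : Fin n → ℤ)
    (P : Matrix (Fin g) (Fin h) ℤ) (s : Fin h ⊕ Fin g → ℤ)
    (xt : Fin q → ℤ) (z : Fin h ⊕ Fin g → ℤ) : Fin n ⊕ (Fin h ⊕ Fin g) → ℤ :=
  (Bint n q g h l B y P s).mulVec (Sum.elim (Sum.elim xt z) fun _ => (-1 : ℤ))

lemma BBCH_mulVec_inl (g h l : ℕ) (P : Matrix (Fin g) (Fin h) ℤ)
    (z : Fin h ⊕ Fin g → ℤ) (i : Fin h) :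
    (BBCH g h l P).mulVec z (Sum.inl i) = z (Sum.inl i) := by
  have hz : z = Sum.elim (z ∘ Sum.inl) (z ∘ Sum.inr) := by funext j; cases j <;> rfl
  rw [BBCH, hz, Matrix.fromBlocks_mulVec]
  simp

lemma BBCH_mulVec_inr (g h l : ℕ) (P : Matrix (Fin g) (Fin h) ℤ)
    (z : Fin h ⊕ Fin g → ℤ) (i : Fin g) :
    (BBCH g h l P).mulVec z (Sum.inr i) =
      (l : ℤ) * ∑ j, P i j * z (Sum.inl j) + 2 * l * z (Sum.inr i) := by
  have hz : z = Sum.elim (z ∘ Sum.inl) (z ∘ Sum.inr) := by funext j; cases j <;> rfl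
  rw [BBCH, hz, Matrix.fromBlocks_mulVec, Matrix.smul_mulVec,
    Matrix.smul_mulVec, Matrix.one_mulVec]
  simp [Matrix.mulVec, dotProduct, Finset.mul_sum, mul_assoc]

lemma BBCH_mulVec_inj (g h l : ℕ) (hl : 0 < l) (P : Matrix (Fin g) (Fin h) ℤ)
    (z₁ z₂ : Fin h ⊕ Fin g → ℤ)
    (hz : (BBCH g h l P).mulVec z₁ = (BBCH g h l P).mulVec z₂) : z₁ = z₂ := by
  have htop : ∀ i : Fin h, z₁ (Sum.inl i) = z₂ (Sum.inl i) := by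
    intro i
    have := congrFun hz (Sum.inl i)
    rwa [BBCH_mulVec_inl, BBCH_mulVec_inl] at this
  funext i
  cases i with
  | inl i => exact htop i
  | inr i =>
    have := congrFun hz (Sum.inr i)
    rw [BBCH_mulVec_inr, BBCH_mulVec_inr] at this
    have hsum : ∑ j, P i j * z₁ (Sum.inl j) = ∑ j, P i j * z₂ (Sum.inl j) := by
      exact Finset.sum_congr rfl (fun j _ => by rw [htop j])
    rw [hsum] at this
    have h2l : (2 * l : ℤ) ≠ 0 := by positivity
    have h2 : 2 * (l : ℤ) * z₁ (Sum.inr i) = 2 * l * z₂ (Sum.inr i) := by linarith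
    exact mul_left_cancel₀ h2l h2

lemma uvec_eq (n q g h l : ℕ) (B : Matrix (Fin n) (Fin q) ℤ) (y : Fin n → ℤ)
    (P : Matrix (Fin g) (Fin h) ℤ) (s : Fin h ⊕ Fin g → ℤ)
    (xt : Fin q → ℤ) (z : Fin h ⊕ Fin g → ℤ) :
    uvec n q g h l B y P s xt z =
      Sum.elim (2 • B.mulVec xt - 2 • y) ((BBCH g h l P).mulVec z - s) := by
  funext i
  cases i with
  | inl i =>
    simp [uvec, Bint, Matrix.mulVec, dotProduct, Fintype.sum_sum_type,
      Finset.mul_sum, two_smul, mul_assoc]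
    rw [← Finset.mul_sum]
    ring
  | inr i =>
    simp [uvec, Bint, Matrix.mulVec, dotProduct, Fintype.sum_sum_type]
    ring

theorem stmt15 (n q g h l : ℕ) (hn : 0 < n) (hq : 0 < q) (hg : 0 < g) (hh : 0 < h)
    (hl : 0 < l) (p : ℝ) (hp : 1 ≤ p) (t r : ℕ) (hr : 1 ≤ r)
    (B : Matrix (Fin n) (Fin q) ℤ) (y : Fin n → ℤ)
    (P : Matrix (Fin g) (Fin h) ℤ) (s : Fin h ⊕ Fin g → ℤ)
    (xt : Fin q → ℤ) (hxt : ∑ i, |((B.mulVec xt - y) i : ℝ)| ^ p ≤ (t : ℝ)) :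
    (∀ z : Fin h ⊕ Fin g → ℤ,
      (∑ i, |(((BBCH g h l P).mulVec z - s) i : ℝ)| ^ p) = (r : ℝ) →
        uvec n q g h l B y P s xt z =
          Sum.elim (2 • B.mulVec xt - 2 • y) ((BBCH g h l P).mulVec z - s) ∧
        uvec n q g h l B y P s xt z ≠ 0 ∧
        (∃ xx, uvec n q g h l B y P s xt z = (Bint n q g h l B y P s).mulVec xx) ∧
        ∑ i, |(uvec n q g h l B y P s xt z i : ℝ)| ^ p ≤ (2 : ℝ) ^ p * t + r) ∧
    Set.InjOn (uvec n q g h l B y P s xt)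
      {z | (∑ i, |(((BBCH g h l P).mulVec z - s) i : ℝ)| ^ p) = (r : ℝ)} ∧
    (∀ Z : Finset (Fin h ⊕ Fin g → ℤ),
      (∀ z ∈ Z, (∑ i, |(((BBCH g h l P).mulVec z - s) i : ℝ)| ^ p) = (r : ℝ)) →
      ∃ U : Finset (Fin n ⊕ (Fin h ⊕ Fin g) → ℤ),
        Z.card ≤ U.card ∧ ∀ u ∈ U, u ≠ 0 ∧
          (∃ xx, u = (Bint n q g h l B y P s).mulVec xx) ∧
          ∑ i, |(u i : ℝ)| ^ p ≤ (2 : ℝ) ^ p * t + r) := by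
  have hp0 : p ≠ 0 := by positivity
  have main : ∀ z : Fin h ⊕ Fin g → ℤ,
      (∑ i, |(((BBCH g h l P).mulVec z - s) i : ℝ)| ^ p) = (r : ℝ) →
        uvec n q g h l B y P s xt z =
          Sum.elim (2 • B.mulVec xt - 2 • y) ((BBCH g h l P).mulVec z - s) ∧
        uvec n q g h l B y P s xt z ≠ 0 ∧
        (∃ xx, uvec n q g h l B y P s xt z = (Bint n q g h l B y P s).mulVec xx) ∧
        ∑ i, |(uvec n q g h l B y P s xt z i : ℝ)| ^ p ≤ (2 : ℝ) ^ p * t + r := by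
    intro z hz
    have heq := uvec_eq n q g h l B y P s xt z
    refine ⟨heq, ?_, ⟨_, rfl⟩, ?_⟩
    · intro h0
      have hall : ∀ i, ((BBCH g h l P).mulVec z - s) i = 0 := by
        intro i
        have := congrFun h0 (Sum.inr i)
        rw [heq] at this
        exact this
      have : (∑ i, |(((BBCH g h l P).mulVec z - s) i : ℝ)| ^ p) = 0 := by
        apply Finset.sum_eq_zero
        intro i _
        rw [hall i]
        simp [Real.zero_rpow hp0]
      rw [hz] at this
      have : (r : ℝ) ≥ 1 := by exact_mod_cast hr
      linarith
    · rw [heq, Fintype.sum_sum_type]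
      simp only [Sum.elim_inl, Sum.elim_inr]
      have h1 : ∀ i : Fin n, |(((2 • B.mulVec xt - 2 • y) i : ℤ) : ℝ)| ^ p =
          (2 : ℝ) ^ p * |((B.mulVec xt - y) i : ℝ)| ^ p := by
        intro i
        have : ((2 • B.mulVec xt - 2 • y) i : ℤ) = 2 * ((B.mulVec xt - y) i) := by
          simp [two_smul]; ring
        rw [this]
        push_cast
        rw [abs_mul, Real.mul_rpow (by norm_num) (abs_nonneg _)]
        norm_num
      rw [Finset.sum_congr rfl (fun i _ => h1 i), ← Finset.mul_sum, hz]
      have h2p : (0 : ℝ) ≤ (2 : ℝ) ^ p := Real.rpow_nonneg (by norm_num) p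
      nlinarith
  refine ⟨main, ?_, ?_⟩
  · intro z₁ h₁ z₂ h₂ huv
    have e₁ := uvec_eq n q g h l B y P s xt z₁
    have e₂ := uvec_eq n q g h l B y P s xt z₂
    rw [e₁, e₂] at huv
    apply BBCH_mulVec_inj g h l hl P
    funext i
    have := congrFun huv (Sum.inr i)
    simp only [Sum.elim_inr, Pi.sub_apply] at this
    linarith [this]
  · intro Z hZ
    have inj : Set.InjOn (uvec n q g h l B y P s xt) Z := by
      intro z₁ h₁ z₂ h₂ huv
      have e₁ := uvec_eq n q g h l B y P s xt z₁
      have e₂ := uvec_eq n q g h l B y P s xt z₂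
      rw [e₁, e₂] at huv
      apply BBCH_mulVec_inj g h l hl P
      funext i
      have := congrFun huv (Sum.inr i)
      simp only [Sum.elim_inr, Pi.sub_apply] at this
      linarith [this]
    refine ⟨Z.image (uvec n q g h l B y P s xt),
      (Finset.card_image_of_injOn inj).ge, ?_⟩
    intro u hu
    obtain ⟨z, hzZ, rfl⟩ := Finset.mem_image.mp hu
    obtain ⟨_, h2, h3, h4⟩ := main z (hZ z hzZ)
    exact ⟨h2, h3, h4⟩
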